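/- For a finite nonempty subgraph Y of a 2m-regular graph, 2m − δ(Y) ≤ 2m · #∂Y / #Y, where δ(Y) is the average degree of Y in the induced subgraph and ∂Y is the external boundary of Y. -/

import Mathlib

/-- For a finite nonempty subgraph `Y` of a `2m`-regular graph,
`2m − δ(Y) ≤ 2m · #∂Y / #Y`, where `δ(Y)` is the average internal degree of `Y`
and `∂Y = B₁(Y) \ Y` is the external boundary. -/
theorem le_mul_boundary_card_div {V : Type*} [DecidableEq V] (G : SimpleGraph V)
    [DecidableRel G.Adj] [∀ v : V, Fintype (G.neighborSet v)] (m : ℕ)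
    (hreg : ∀ v : V, G.degree v = 2 * m)
    (Y : Finset V) (hY : Y.Nonempty) :
    2 * m - (∑ v ∈ Y, ((G.neighborFinset v ∩ Y).card : ℝ)) / Y.card ≤
      2 * m * (((Y.biUnion (fun v => G.neighborFinset v)) \ Y).card : ℝ) / Y.card := by
  classical
  set S : Finset V := (Y.biUnion fun v => G.neighborFinset v) \ Y with hS
  -- card of neighbor intersection as indicator sum
  have hcard : ∀ (v : V) (B : Finset V),
      (G.neighborFinset v ∩ B).card = ∑ w ∈ B, if G.Adj v w then 1 else 0 := by
    intro v B
    rw [← Finset.card_filter]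
    congr 1
    ext w
    simp [SimpleGraph.mem_neighborFinset, and_comm]
  -- for v ∈ Y, neighbors outside Y are exactly neighbors in S
  have hout : ∀ v ∈ Y, G.neighborFinset v \ Y = G.neighborFinset v ∩ S := by
    intro v hv
    ext w
    simp only [Finset.mem_sdiff, Finset.mem_inter, hS, Finset.mem_biUnion]
    constructor
    · rintro ⟨hw, hwY⟩
      exact ⟨hw, ⟨v, hv, hw⟩, hwY⟩
    · rintro ⟨hw, _, hwY⟩
      exact ⟨hw, hwY⟩
  -- double counting
  have hswap : ∑ v ∈ Y, (G.neighborFinset v ∩ S).card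
      = ∑ w ∈ S, (G.neighborFinset w ∩ Y).card := by
    simp_rw [hcard]
    rw [Finset.sum_comm]
    apply Finset.sum_congr rfl
    intro w _
    apply Finset.sum_congr rfl
    intro v _
    simp [G.adj_comm]
  -- boundary bound
  have hbd : ∑ w ∈ S, (G.neighborFinset w ∩ Y).card ≤ 2 * m * S.card := by
    calc ∑ w ∈ S, (G.neighborFinset w ∩ Y).card
        ≤ ∑ w ∈ S, 2 * m := by
          apply Finset.sum_le_sum
          intro w _
          calc (G.neighborFinset w ∩ Y).card ≤ (G.neighborFinset w).card :=
                Finset.card_le_card Finset.inter_subset_left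
            _ = 2 * m := hreg w
      _ = 2 * m * S.card := by rw [Finset.sum_const, smul_eq_mul, mul_comm]
  -- degree decomposition
  have hdeg : 2 * m * Y.card
      = ∑ v ∈ Y, (G.neighborFinset v ∩ Y).card + ∑ v ∈ Y, (G.neighborFinset v ∩ S).card := by
    rw [← Finset.sum_add_distrib]
    have : ∀ v ∈ Y, (G.neighborFinset v ∩ Y).card + (G.neighborFinset v ∩ S).card = 2 * m := by
      intro v hv
      rw [← hout v hv, Finset.card_inter_add_card_sdiff]
      exact hreg v
    rw [Finset.sum_congr rfl this, Finset.sum_const, smul_eq_mul, mul_comm]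
  have hnat : 2 * m * Y.card ≤ ∑ v ∈ Y, (G.neighborFinset v ∩ Y).card + 2 * m * S.card := by
    rw [hdeg]
    exact Nat.add_le_add_left (hswap ▸ hbd) _
  -- pass to reals
  have hYpos : (0 : ℝ) < Y.card := by exact_mod_cast Finset.card_pos.mpr hY
  rw [sub_le_iff_le_add, ← add_div, le_div_iff₀ hYpos]
  have := (Nat.cast_le (α := ℝ)).mpr hnat
  push_cast at this ⊢
  linarith
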